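/- For any ℓ ≥ 1 and cache size k such that ℓ divides k + 1, the competitive ratio of LRU for the ℓ-layered paging problem equals exactly k: LRU is k-competitive (since every layered request sequence is in particular a valid paging request sequence and LRU is k-competitive for standard paging), and no ratio smaller than k is achievable by LRU on layered sequences. -/

import Mathlib

open MeasureTheory ProbabilityTheory
open scoped ENNReal

/-- A valid evolution of cache states for a paging algorithm with cache size `k`
serving the request sequence `σ`: `caches i` is the cache content just before
serving request number `i` (the cache is initially empty, a page may only enter
the cache when it is requested, the requested page must be in the cache
afterwards, and the cache never holds more than `k` pages). -/
def IsExec {P : Type*} [DecidableEq P] (k : ℕ) (σ : ℕ → P) (caches : ℕ → Finset P) : Prop :=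
  caches 0 = ∅ ∧
    ∀ i, σ i ∈ caches (i + 1) ∧ caches (i + 1) ⊆ insert (σ i) (caches i) ∧
      (caches (i + 1)).card ≤ k

/-- The number of cache misses incurred on the first `m` requests of `σ` by an
algorithm whose cache states are `caches`. -/
def missCount {P : Type*} [DecidableEq P] (σ : ℕ → P) (caches : ℕ → Finset P)
    (m : ℕ) : ℕ :=
  ((Finset.range m).filter fun i => σ i ∉ caches i).card

/-- The optimal (offline) number of cache misses on the first `m` requests of
`σ`, with cache size `k`. -/
noncomputable def OPT {P : Type*} [DecidableEq P] (k : ℕ) (σ : ℕ → P) (m : ℕ) : ℕ :=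
  sInf {c | ∃ caches : ℕ → Finset P, IsExec k σ caches ∧ missCount σ caches m = c}

/-- A deterministic online paging algorithm with cache size `k`: it chooses its
cache content as a function of the history of requests served so far
(the cache is initially empty, a page may only enter the cache when it is
requested, the requested page must be in the cache afterwards, and the cache
never holds more than `k` pages). -/
structure OnlineAlgo (P : Type*) [DecidableEq P] (k : ℕ) where
  cache : List P → Finset P
  cache_nil : cache [] = ∅
  mem_cache : ∀ h p, p ∈ cache (h ++ [p])
  cache_subset : ∀ h p, cache (h ++ [p]) ⊆ insert p (cache h)
  card_cache_le : ∀ h, (cache h).card ≤ k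

/-- The cache of online algorithm `A` just before serving request `i` of `σ`. -/
def OnlineAlgo.caches {P : Type*} [DecidableEq P] {k : ℕ} (A : OnlineAlgo P k) (σ : ℕ → P)
    (i : ℕ) : Finset P :=
  A.cache ((List.range i).map σ)

/-- The cost (number of cache misses) of online algorithm `A` on the first `m`
requests of `σ`. -/
def OnlineAlgo.cost {P : Type*} [DecidableEq P] {k : ℕ} (A : OnlineAlgo P k)
    (σ : ℕ → P) (m : ℕ) : ℕ :=
  missCount σ (A.caches σ) m

/-- In the `ℓ`-layered paging problem with `n` experts per layer, pages are
pairs (layer, expert index) with layer in `[0, ℓ)` and expert index in `[0, n)`;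
a request sequence is layered if its `i`-th request is a page of layer `i % ℓ`.
A round is a block of `ℓ` consecutive requests starting at a multiple of `ℓ`. -/
def IsLayered (n ℓ : ℕ) (σ : ℕ → ℕ × ℕ) : Prop :=
  ∀ i, (σ i).1 = i % ℓ ∧ (σ i).2 < n

/-- The cache of the LRU (least recently used) algorithm just before serving
request `i` of `σ`: it consists of the (at most `k`) most recently requested
distinct pages, which is exactly the cache content obtained by evicting, on
each miss with a full cache, the page whose most recent request is earliest. -/
def lruCaches {P : Type*} [DecidableEq P] (k : ℕ) (σ : ℕ → P) (i : ℕ) : Finset P :=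
  ((((List.range i).map σ).dedup).reverse.take k).toFinset

/-- The number of cache misses of LRU on the first `m` requests of `σ`. -/
def lruCost {P : Type*} [DecidableEq P] (k : ℕ) (σ : ℕ → P) (m : ℕ) : ℕ :=
  missCount σ (lruCaches k σ) m

lemma exists_union_append {P : Type*} [DecidableEq P] (L M : List P) :
    ∃ f : List P, L ∪ M = f ++ M := by
  induction L with
  | nil => exact ⟨[], rfl⟩
  | cons x L ih =>
    obtain ⟨f, hf⟩ := ih
    by_cases hx : x ∈ L ∪ M
    · exact ⟨f, by rw [List.cons_union, List.insert_of_mem hx, hf]⟩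
    · exact ⟨x :: f, by rw [List.cons_union, List.insert_of_not_mem hx, hf]; rfl⟩
lemma lru_mem_iff {P : Type*} [DecidableEq P] (k : ℕ) (σ : ℕ → P) {i j : ℕ} {p : P}
    (hj : j < i) (hσj : σ j = p) (hlast : ∀ u, j < u → u < i → σ u ≠ p) :
    (p ∈ lruCaches k σ i ↔ ((List.range' (j+1) (i-j-1)).map σ).dedup.length < k) := by
  set B : List P := (List.range' (j+1) (i-j-1)).map σ with hB
  have hpB : p ∉ B := by
    simp only [hB, List.mem_map, List.mem_range']
    rintro ⟨u, ⟨hu1, hu2⟩, hu3⟩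
    exact hlast u (by omega) (by omega) hu3
  have hsplit : (List.range i).map σ = (List.range' 0 j).map σ ++ p :: B := by
    rw [List.range_eq_range']
    have h1 : List.range' 0 i = List.range' 0 j ++ List.range' j (i - j) := by
      have := List.range'_append (s := 0) (m := j) (n := i-j) (step := 1)
      simp only [Nat.zero_add, Nat.one_mul] at this
      rw [this]; congr 1; omega
    have h2 : List.range' j (i - j) = j :: List.range' (j+1) (i-j-1) := by
      have : i - j = (i - j - 1) + 1 := by omega
      rw [this, List.range'_succ]
      simp
    rw [h1, h2, List.map_append, List.map_cons, hσj]
  have hpBd : p ∉ B.dedup := by simpa [List.mem_dedup] using hpB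
  have hded : ((List.range i).map σ).dedup
      = ((List.range' 0 j).map σ) ∪ (p :: B.dedup) := by
    rw [hsplit, List.dedup_append, List.dedup_cons_of_notMem hpB]
  obtain ⟨f, hf⟩ := exists_union_append ((List.range' 0 j).map σ) (p :: B.dedup)
  have hded2 : ((List.range i).map σ).dedup = f ++ p :: B.dedup := by rw [hded, hf]
  have hnd : (f ++ p :: B.dedup).Nodup := hded2 ▸ List.nodup_dedup _
  have hrev : ((List.range i).map σ).dedup.reverse = B.dedup.reverse ++ p :: f.reverse := by
    rw [hded2, List.reverse_append, List.reverse_cons, List.append_assoc]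
    simp
  constructor
  · intro hmem
    by_contra hge
    push_neg at hge
    rw [lruCaches, List.mem_toFinset, hrev, List.take_append] at hmem
    have h1 : k - B.dedup.reverse.length = 0 := by simp; omega
    rw [h1, List.take_zero, List.append_nil] at hmem
    exact hpBd (by simpa using List.mem_of_mem_take hmem)
  · intro hlt
    rw [lruCaches, List.mem_toFinset, hrev, List.take_append]
    have h1 : (k - B.dedup.reverse.length) = (k - B.dedup.length - 1) + 1 := by simp; omega
    rw [h1, List.take_cons]
    simp
    omega
lemma lru_mem_prefix {P : Type*} [DecidableEq P] {k : ℕ} {σ : ℕ → P} {i : ℕ} {p : P}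
    (h : p ∈ lruCaches k σ i) : ∃ u, u < i ∧ σ u = p := by
  have h2 := List.mem_of_mem_take (List.mem_toFinset.mp h)
  rw [List.mem_reverse, List.mem_dedup, List.mem_map] at h2
  obtain ⟨u, hu, hup⟩ := h2
  exact ⟨u, by simpa using hu, hup⟩
lemma lru_hit {P : Type*} [DecidableEq P] {k : ℕ} (hk : 1 ≤ k) (σ : ℕ → P) (t : ℕ) :
    σ t ∈ lruCaches k σ (t + 1) := by
  rw [lru_mem_iff k σ (Nat.lt_succ_self t) rfl (fun u h1 h2 => by omega)]
  simpa using (show 0 < k by omega)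
lemma lru_evicted {P : Type*} [DecidableEq P] {k : ℕ} (σ : ℕ → P) {t i : ℕ}
    (hti : t < i) (hmiss : σ t ∉ lruCaches k σ i) :
    ∃ S : Finset P, k ≤ S.card ∧ σ t ∉ S ∧ ∀ q ∈ S, ∃ u, t < u ∧ u < i ∧ σ u = q := by
  classical
  set p := σ t with hp
  set j := Nat.findGreatest (fun u => σ u = p) (i - 1) with hjdef
  have hjt : t ≤ j := Nat.le_findGreatest (by omega) rfl
  have hji : j < i := by
    have : j ≤ i - 1 := Nat.findGreatest_le _
    omega
  have hσj : σ j = p := by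
    have : (fun u => σ u = p) j := Nat.findGreatest_spec (P := fun u => σ u = p) (by omega) rfl
    exact this
  have hlast : ∀ u, j < u → u < i → σ u ≠ p := fun u h1 h2 =>
    Nat.findGreatest_is_greatest h1 (by omega)
  have hlen : k ≤ ((List.range' (j+1) (i-j-1)).map σ).dedup.length := by
    by_contra hcon
    exact hmiss ((lru_mem_iff k σ hji hσj hlast).mpr (by omega))
  refine ⟨((List.range' (j+1) (i-j-1)).map σ).toFinset, ?_, ?_, ?_⟩
  · rw [List.card_toFinset]; exact hlen
  · simp only [List.mem_toFinset, List.mem_map, List.mem_range']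
    rintro ⟨u, ⟨hu1, hu2⟩, hu3⟩
    exact hlast u (by omega) (by omega) hu3
  · intro q hq
    simp only [List.mem_toFinset, List.mem_map, List.mem_range'] at hq
    obtain ⟨u, ⟨hu1, hu2⟩, hu3⟩ := hq
    exact ⟨u, by omega, by omega, hu3⟩
lemma lru_not_mem {P : Type*} [DecidableEq P] {k : ℕ} (σ : ℕ → P) {i a : ℕ} {p : P}
    (S : Finset P) (hcard : k ≤ S.card) (hpS : p ∉ S)
    (hS : ∀ q ∈ S, ∃ u, a ≤ u ∧ u < i ∧ σ u = q)
    (hlast : ∀ u, u < i → σ u = p → u < a) :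
    p ∉ lruCaches k σ i := by
  classical
  by_cases hp : ∃ t, t < i ∧ σ t = p
  · obtain ⟨t, hti, hσt⟩ := hp
    set j := Nat.findGreatest (fun u => σ u = p) (i - 1) with hjdef
    have hjt : t ≤ j := Nat.le_findGreatest (by omega) hσt
    have hji : j < i := by
      have : j ≤ i - 1 := Nat.findGreatest_le _
      omega
    have hσj : σ j = p := Nat.findGreatest_spec (P := fun u => σ u = p) (by omega) hσt
    have hlastj : ∀ u, j < u → u < i → σ u ≠ p := fun u h1 h2 =>
      Nat.findGreatest_is_greatest h1 (by omega)
    have hja : j < a := hlast j hji hσj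
    rw [lru_mem_iff k σ hji hσj hlastj]
    have hsub : S ⊆ ((List.range' (j+1) (i-j-1)).map σ).toFinset := by
      intro q hq
      obtain ⟨u, hu1, hu2, hu3⟩ := hS q hq
      simp only [List.mem_toFinset, List.mem_map]
      exact ⟨u, List.mem_range'_1.mpr (by omega), hu3⟩
    have := Finset.card_le_card hsub
    rw [List.card_toFinset] at this
    omega
  · intro hmem
    obtain ⟨u, hu, hup⟩ := lru_mem_prefix hmem
    exact hp ⟨u, hu, hup⟩
lemma exec_singleton {P : Type*} [DecidableEq P] {k : ℕ} (hk : 1 ≤ k) (σ : ℕ → P) :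
    IsExec k σ (fun i => match i with | 0 => ∅ | (n+1) => {σ n}) := by
  refine ⟨rfl, fun i => ⟨by simp, ?_, by simpa using hk⟩⟩
  cases i <;> simp
lemma OPT_le {P : Type*} [DecidableEq P] {k : ℕ} {σ : ℕ → P} {C : ℕ → Finset P}
    (hC : IsExec k σ C) (m : ℕ) : OPT k σ m ≤ missCount σ C m :=
  Nat.sInf_le ⟨C, hC, rfl⟩
lemma OPT_attained {P : Type*} [DecidableEq P] {k : ℕ} (hk : 1 ≤ k) (σ : ℕ → P) (m : ℕ) :
    ∃ C : ℕ → Finset P, IsExec k σ C ∧ missCount σ C m = OPT k σ m := by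
  have hne : {c | ∃ caches : ℕ → Finset P, IsExec k σ caches ∧ missCount σ caches m = c}.Nonempty := by
    exact ⟨_, ⟨_, exec_singleton hk σ, rfl⟩⟩
  exact Nat.sInf_mem hne
lemma cache_sub {P : Type*} [DecidableEq P] {k : ℕ} {σ : ℕ → P} {C : ℕ → Finset P}
    (hC : IsExec k σ C) (a : ℕ) :
    ∀ d, C (a + d) ⊆ C a ∪ (Finset.Ico a (a + d)).image σ := by
  intro d
  induction d with
  | zero => simp
  | succ d ih =>
    have h2 := (hC.2 (a + d)).2.1
    intro x hx
    rcases Finset.mem_insert.mp (h2 (by rwa [Nat.add_succ] at hx)) with rfl | hx'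
    · exact Finset.mem_union_right _ (Finset.mem_image.mpr ⟨a + d, by rw [Finset.mem_Ico]; omega, rfl⟩)
    · rcases Finset.mem_union.mp (ih hx') with h | h
      · exact Finset.mem_union_left _ h
      · refine Finset.mem_union_right _ ?_
        obtain ⟨v, hv, hveq⟩ := Finset.mem_image.mp h
        rw [Finset.mem_Ico] at hv
        exact Finset.mem_image.mpr ⟨v, by rw [Finset.mem_Ico]; omega, hveq⟩
lemma hits_subset {P : Type*} [DecidableEq P] {k : ℕ} {σ : ℕ → P} {C : ℕ → Finset P}
    (hC : IsExec k σ C) (t e : ℕ) (hall : ∀ u, t < u → u ≤ e → σ u ∈ C u) :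
    ∀ u, t < u → u ≤ e → σ u ∈ C (t + 1) := by
  intro u
  induction u using Nat.strong_induction_on with
  | _ u ih =>
    intro hu1 hu2
    have h1 : σ u ∈ C u := hall u hu1 hu2
    have h2 : C u ⊆ C (t + 1) ∪ (Finset.Ico (t + 1) u).image σ := by
      have := cache_sub hC (t + 1) (u - (t + 1))
      rwa [Nat.add_sub_cancel' (by omega)] at this
    rcases Finset.mem_union.mp (h2 h1) with h | h
    · exact h
    · obtain ⟨v, hv, hveq⟩ := Finset.mem_image.mp h
      rw [Finset.mem_Ico] at hv
      rw [← hveq]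
      exact ih v (by omega) (by omega) (by omega)
lemma opt_miss_window {P : Type*} [DecidableEq P] {k : ℕ} {σ : ℕ → P} {C : ℕ → Finset P}
    (hC : IsExec k σ C) (t e : ℕ) (T : Finset P) (hT : k + 1 ≤ T.card)
    (hTm : ∀ q ∈ T, q = σ t ∨ ∃ u, t < u ∧ u ≤ e ∧ σ u = q) :
    ∃ u, t < u ∧ u ≤ e ∧ σ u ∉ C u := by
  by_contra hcon
  push_neg at hcon
  have hsub : T ⊆ C (t + 1) := by
    intro q hq
    rcases hTm q hq with rfl | ⟨u, hu1, hu2, rfl⟩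
    · exact (hC.2 t).1
    · exact hits_subset hC t e hcon u hu1 hu2
  have h1 := Finset.card_le_card hsub
  have h2 := (hC.2 t).2.2
  omega
lemma phase {P : Type*} [DecidableEq P] {k : ℕ} (σ : ℕ → P) (t e : ℕ) (G : Finset ℕ)
    (hGcard : k ≤ G.card)
    (hG : ∀ u ∈ G, t < u ∧ u ≤ e ∧ σ u ∉ lruCaches k σ u) :
    ∃ T : Finset P, k + 1 ≤ T.card ∧
      ∀ q ∈ T, q = σ t ∨ ∃ u, t < u ∧ u ≤ e ∧ σ u = q := by
  classical
  by_cases hA : ∃ u ∈ G, σ u = σ t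
  · obtain ⟨u, huG, huσ⟩ := hA
    obtain ⟨ht1, ht2, ht3⟩ := hG u huG
    obtain ⟨S, hS1, hS2, hS3⟩ := lru_evicted σ ht1 (huσ ▸ ht3)
    refine ⟨insert (σ t) S, ?_, ?_⟩
    · rw [Finset.card_insert_of_notMem hS2]; omega
    · intro q hq
      rcases Finset.mem_insert.mp hq with rfl | hqS
      · exact Or.inl rfl
      · obtain ⟨v, hv1, hv2, hv3⟩ := hS3 q hqS
        exact Or.inr ⟨v, hv1, by omega, hv3⟩
  · push_neg at hA
    by_cases hB : Set.InjOn σ ↑G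
    · refine ⟨insert (σ t) (G.image σ), ?_, ?_⟩
      · rw [Finset.card_insert_of_notMem, Finset.card_image_of_injOn hB]
        · omega
        · simp only [Finset.mem_image]
          rintro ⟨u, huG, huσ⟩
          exact hA u huG huσ
      · intro q hq
        rcases Finset.mem_insert.mp hq with rfl | hq
        · exact Or.inl rfl
        · obtain ⟨u, huG, rfl⟩ := Finset.mem_image.mp hq
          obtain ⟨h1, h2, _⟩ := hG u huG
          exact Or.inr ⟨u, h1, h2, rfl⟩
    · have hpair : ∃ u ∈ G, ∃ v ∈ G, u < v ∧ σ u = σ v := by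
        rw [Set.InjOn] at hB
        push_neg at hB
        obtain ⟨u, huG, v, hvG, hσuv, huv⟩ := hB
        rcases Nat.lt_or_ge u v with h | h
        · exact ⟨u, huG, v, hvG, h, hσuv⟩
        · exact ⟨v, hvG, u, huG, by omega, hσuv.symm⟩
      obtain ⟨u, huG, v, hvG, huv, hσuv⟩ := hpair
      obtain ⟨hu1, hu2, _⟩ := hG u huG
      obtain ⟨hv1, hv2, hv3⟩ := hG v hvG
      obtain ⟨S, hS1, hS2, hS3⟩ := lru_evicted σ huv (hσuv ▸ hv3)
      refine ⟨insert (σ v) S, ?_, ?_⟩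
      · rw [Finset.card_insert_of_notMem (hσuv ▸ hS2)]; omega
      · intro q hq
        rcases Finset.mem_insert.mp hq with rfl | hqS
        · exact Or.inr ⟨v, hv1, hv2, rfl⟩
        · obtain ⟨w, hw1, hw2, hw3⟩ := hS3 q hqS
          exact Or.inr ⟨w, by omega, by omega, hw3⟩
lemma lru_upper {P : Type*} [DecidableEq P] {k : ℕ} (hk : 1 ≤ k) (σ : ℕ → P) (m : ℕ) :
    lruCost k σ m ≤ k * OPT k σ m + k := by
  classical
  obtain ⟨C, hC, hCeq⟩ := OPT_attained hk σ m
  rw [← hCeq]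
  set D := (Finset.range m).filter (fun i => σ i ∉ lruCaches k σ i) with hDdef
  set M := (Finset.range m).filter (fun i => σ i ∉ C i) with hMdef
  have hgoal : lruCost k σ m = D.card := rfl
  have hmiss : missCount σ C m = M.card := rfl
  rw [hgoal, hmiss]
  set F := D.card with hFdef
  rcases Nat.eq_zero_or_pos F with h0 | hFpos
  · omega
  have hm : 1 ≤ m := by
    obtain ⟨x, hx⟩ := Finset.card_pos.mp hFpos
    have := Finset.mem_range.mp (Finset.mem_filter.mp hx).1
    omega
  have h0M : (0 : ℕ) ∈ M := by
    rw [hMdef, Finset.mem_filter, hC.1]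
    exact ⟨Finset.mem_range.mpr hm, by simp⟩
  have hM1 : 1 ≤ M.card := Finset.card_pos.mpr ⟨0, h0M⟩
  rcases Nat.lt_or_ge F (2*k) with hsmall | hbig
  · have := Nat.mul_le_mul_left k hM1
    omega
  set eiso := D.orderIsoOfFin hFdef.symm with heiso
  set f : ℕ → ℕ := fun idx => if h : idx < F then (eiso ⟨idx, h⟩ : ℕ) else 0 with hfdef
  have hfD : ∀ idx, idx < F → f idx ∈ D := by
    intro idx h
    rw [hfdef]
    simp only [dif_pos h]
    exact (eiso ⟨idx, h⟩).2
  have hfmono : ∀ a b, a < b → b < F → f a < f b := by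
    intro a b hab hbF
    rw [hfdef]
    simp only [dif_pos (lt_trans hab hbF), dif_pos hbF]
    have h2 : (⟨a, lt_trans hab hbF⟩ : Fin F) < ⟨b, hbF⟩ := hab
    exact Subtype.coe_lt_coe.mpr (eiso.lt_iff_lt.mpr h2)
  have hfmono' : ∀ a b, a ≤ b → b < F → f a ≤ f b := by
    intro a b hab hbF
    rcases Nat.eq_or_lt_of_le hab with rfl | h
    · exact le_refl _
    · exact le_of_lt (hfmono a b h hbF)
  set J := F / k - 1 with hJdef
  have hFk2 : 2 ≤ F / k := by
    rw [Nat.le_div_iff_mul_le (by omega : 0 < k)]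
    omega
  have hJk : ∀ j r, j ≤ J → r < k → j * k + r < F := by
    intro j r hj hr
    have h1 : (j + 1) * k ≤ (F / k) * k := Nat.mul_le_mul_right k (by omega)
    have h2 : (F / k) * k ≤ F := Nat.div_mul_le_self F k
    have h3 : (j + 1) * k = j * k + k := by ring
    omega
  have hjk1 : ∀ j : ℕ, 1 ≤ j → 1 ≤ j * k := fun j hj => Nat.one_le_iff_ne_zero.mpr
    (by positivity)
  have key : ∀ j, ∃ v, 1 ≤ j → j ≤ J →
      (f (j * k - 1) < v ∧ v ≤ f (j * k + k - 1) ∧ σ v ∉ C v) := by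
    intro j
    by_cases hj : 1 ≤ j ∧ j ≤ J
    · obtain ⟨hj1, hj2⟩ := hj
      have hjk : 1 ≤ j * k := hjk1 j hj1
      set G := (Finset.range k).image (fun r => f (j * k + r)) with hG
      have hGcard : G.card = k := by
        rw [hG, Finset.card_image_of_injOn, Finset.card_range]
        intro a ha b hb hab
        simp only [Finset.coe_range, Set.mem_Iio] at ha hb
        by_contra hne
        rcases Nat.lt_or_ge a b with h | h
        · exact absurd hab (Nat.ne_of_lt (hfmono _ _ (by omega) (hJk j b hj2 hb)))
        · exact absurd hab.symm (Nat.ne_of_lt (hfmono _ _ (by omega) (hJk j a hj2 ha)))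
      have hGprop : ∀ v ∈ G, f (j * k - 1) < v ∧ v ≤ f (j * k + k - 1) ∧
          σ v ∉ lruCaches k σ v := by
        intro v hv
        obtain ⟨r, hr, rfl⟩ := Finset.mem_image.mp hv
        rw [Finset.mem_range] at hr
        have hmem := hfD (j * k + r) (hJk j r hj2 hr)
        have hmissr := (Finset.mem_filter.mp hmem).2
        refine ⟨hfmono _ _ (by omega) (hJk j r hj2 hr), ?_, hmissr⟩
        have hF1 : j * k + k - 1 < F := by
          have := hJk j (k - 1) hj2 (by omega)
          omega
        exact hfmono' _ _ (by omega) hF1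
      obtain ⟨T, hT1, hT2⟩ := phase σ (f (j * k - 1)) (f (j * k + k - 1)) G
        (by rw [hGcard]) hGprop
      obtain ⟨v, hv1, hv2, hv3⟩ := opt_miss_window hC _ _ T hT1 hT2
      exact ⟨v, fun _ _ => ⟨hv1, hv2, hv3⟩⟩
    · exact ⟨0, fun h1 h2 => absurd ⟨h1, h2⟩ hj⟩
  choose u hu using key
  set W := insert 0 ((Finset.Icc 1 J).image u) with hW
  have humem : ∀ j, 1 ≤ j → j ≤ J → u j ∈ M := by
    intro j hj1 hj2
    obtain ⟨h1, h2, h3⟩ := hu j hj1 hj2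
    have hDm : f (j * k + k - 1) ∈ D := hfD _ (by have := hJk j (k - 1) hj2 (by omega); omega)
    have : f (j * k + k - 1) < m := Finset.mem_range.mp (Finset.mem_filter.mp hDm).1
    rw [hMdef, Finset.mem_filter]
    exact ⟨Finset.mem_range.mpr (by omega), h3⟩
  have huinj : ∀ a ∈ Finset.Icc 1 J, ∀ b ∈ Finset.Icc 1 J, a < b → u a < u b := by
    intro a ha b hb hab
    rw [Finset.mem_Icc] at ha hb
    obtain ⟨ha1, ha2, _⟩ := hu a ha.1 ha.2
    obtain ⟨hb1, _, _⟩ := hu b hb.1 hb.2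
    have hidx : a * k + k - 1 ≤ b * k - 1 := by
      have : (a + 1) * k ≤ b * k := Nat.mul_le_mul_right k (by omega)
      have h3 : (a + 1) * k = a * k + k := by ring
      have := hjk1 b hb.1
      omega
    have hbF : b * k - 1 < F := by
      have := hJk b 0 hb.2 (by omega)
      omega
    have := hfmono' _ _ hidx hbF
    omega
  have hWM : W ⊆ M := by
    intro x hx
    rcases Finset.mem_insert.mp hx with rfl | hx
    · exact h0M
    · obtain ⟨j, hj, rfl⟩ := Finset.mem_image.mp hx
      rw [Finset.mem_Icc] at hj
      exact humem j hj.1 hj.2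
  have hWcard : W.card = J + 1 := by
    rw [hW, Finset.card_insert_of_notMem, Finset.card_image_of_injOn, Nat.card_Icc]
    · omega
    · intro a ha b hb hab
      by_contra hne
      rcases Nat.lt_or_ge a b with h | h
      · exact absurd hab (Nat.ne_of_lt (huinj a ha b hb h))
      · exact absurd hab.symm (Nat.ne_of_lt (huinj b hb a ha (by omega)))
    · simp only [Finset.mem_image, Finset.mem_Icc]
      rintro ⟨j, hj, hj0⟩
      obtain ⟨h1, _, _⟩ := hu j hj.1 hj.2
      omega
  have hMJ : J + 1 ≤ M.card := hWcard ▸ Finset.card_le_card hWM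
  have hdm := Nat.div_add_mod F k
  have hlt := Nat.mod_lt F (show 0 < k by omega)
  have hmul : k * (F / k) ≤ k * M.card := Nat.mul_le_mul_left k (by omega)
  omega
def advSeq (ℓ k : ℕ) : ℕ → ℕ × ℕ := fun i => (i % ℓ, (i % (k+1)) / ℓ)
lemma adv_eq_iff {ℓ k : ℕ} (hdvd : ℓ ∣ k + 1) {i j : ℕ} :
    advSeq ℓ k i = advSeq ℓ k j ↔ i % (k+1) = j % (k+1) := by
  constructor
  · intro h
    have h1 : i % ℓ = j % ℓ := congrArg Prod.fst h
    have h2 : (i % (k+1)) / ℓ = (j % (k+1)) / ℓ := congrArg Prod.snd h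
    have d1 := Nat.mod_mod_of_dvd i hdvd
    have d2 := Nat.mod_mod_of_dvd j hdvd
    calc i % (k+1) = ℓ * ((i % (k+1)) / ℓ) + (i % (k+1)) % ℓ := (Nat.div_add_mod _ _).symm
      _ = ℓ * ((j % (k+1)) / ℓ) + (j % (k+1)) % ℓ := by rw [h2, d1, d2, h1]
      _ = j % (k+1) := Nat.div_add_mod _ _
  · intro h
    have h1 : i % ℓ = j % ℓ := by
      rw [← Nat.mod_mod_of_dvd i hdvd, ← Nat.mod_mod_of_dvd j hdvd, h]
    show (i % ℓ, (i % (k+1)) / ℓ) = (j % ℓ, (j % (k+1)) / ℓ)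
    rw [h1, h]
lemma adv_ne {ℓ k : ℕ} (hdvd : ℓ ∣ k + 1) {u v : ℕ} (huv : u < v) (hle : v - u ≤ k) :
    advSeq ℓ k u ≠ advSeq ℓ k v := by
  intro h
  have hmod : u % (k+1) = v % (k+1) := (adv_eq_iff hdvd).mp h
  have hdvd2 : (k+1) ∣ (v - u) := (Nat.modEq_iff_dvd' (le_of_lt huv)).mp hmod
  have := Nat.le_of_dvd (by omega) hdvd2
  omega
lemma adv_lru_miss {ℓ k : ℕ} (hdvd : ℓ ∣ k + 1) (hk : 1 ≤ k) (i : ℕ) :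
    advSeq ℓ k i ∉ lruCaches k (advSeq ℓ k) i := by
  set σ := advSeq ℓ k with hσ
  rcases Nat.lt_or_ge i (k+1) with hsm | hbig
  · intro hmem
    obtain ⟨u, hu, hσu⟩ := lru_mem_prefix hmem
    exact adv_ne hdvd hu (by omega) hσu
  · apply lru_not_mem σ (a := i - k) (((List.range' (i-k) k).map σ).toFinset)
    · rw [List.card_toFinset, List.dedup_eq_self.mpr, List.length_map, List.length_range']
      apply List.Nodup.map_on
      · intro x hx y hy hxy
        rw [List.mem_range'_1] at hx hy
        by_contra hne
        rcases Nat.lt_or_ge x y with h | h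
        · exact adv_ne hdvd h (by omega) hxy
        · exact adv_ne hdvd (by omega) (by omega) hxy.symm
      · exact List.nodup_range' _
    · simp only [List.mem_toFinset, List.mem_map]
      rintro ⟨u, hu, hσu⟩
      rw [List.mem_range'_1] at hu
      exact adv_ne hdvd (by omega : u < i) (by omega) hσu
    · intro q hq
      simp only [List.mem_toFinset, List.mem_map] at hq
      obtain ⟨u, hu, hσu⟩ := hq
      rw [List.mem_range'_1] at hu
      exact ⟨u, by omega, by omega, hσu⟩
    · intro u hu hσu
      by_contra hcon
      exact adv_ne hdvd hu (by omega) hσu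
lemma adv_lruCost {ℓ k : ℕ} (hdvd : ℓ ∣ k + 1) (hk : 1 ≤ k) (m : ℕ) :
    lruCost k (advSeq ℓ k) m = m := by
  unfold lruCost missCount
  rw [Finset.filter_true_of_mem, Finset.card_range]
  intro i _
  exact adv_lru_miss hdvd hk i
lemma adv_OPT_le {ℓ k : ℕ} (hdvd : ℓ ∣ k + 1) (hk : 1 ≤ k) (m : ℕ) :
    OPT k (advSeq ℓ k) m ≤ m / k + (k + 2) := by
  classical
  set σ := advSeq ℓ k with hσ
  set allP := ((List.range (k+1)).map σ).toFinset with hallP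
  have hmem : ∀ u, σ u ∈ allP := by
    intro u
    have h1 : σ u = σ (u % (k+1)) :=
      (adv_eq_iff hdvd).mpr (Nat.mod_mod_of_dvd u dvd_rfl).symm
    rw [h1, hallP]
    simp only [List.mem_toFinset, List.mem_map]
    exact ⟨u % (k+1), List.mem_range.mpr (Nat.mod_lt u (by omega)), rfl⟩
  set hole : ℕ → ℕ × ℕ := fun i => σ ((i-1)/k * k + k) with hhole
  set C : ℕ → Finset (ℕ × ℕ) :=
    fun i => if i ≤ k then ((List.range i).map σ).toFinset else allP.erase (hole i) with hCdef
  have harith : ∀ i, k ≤ i → i < i/k*k + k ∧ i/k*k + k - i ≤ k := by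
    intro i hi
    have h1 := Nat.div_add_mod i k
    have h2 := Nat.mod_lt i (show 0 < k by omega)
    have h3 : i/k*k = k*(i/k) := Nat.mul_comm _ _
    omega
  have hq_dvd : ∀ i, 1 ≤ i → k ∣ i → (i-1)/k + 1 = i/k := by
    intro i hi h3
    have h4 := Nat.succ_div (a := i-1) (b := k)
    rw [show i - 1 + 1 = i by omega] at h4
    rw [h4, if_pos h3]
  have hq_ndvd : ∀ i, 1 ≤ i → ¬ k ∣ i → (i-1)/k = i/k := by
    intro i hi h3
    have h4 := Nat.succ_div (a := i-1) (b := k)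
    rw [show i - 1 + 1 = i by omega] at h4
    rw [h4, if_neg h3]
    omega
  have hhole_ne : ∀ i j, k ≤ i → (j-1)/k = i/k → σ i ≠ hole j := by
    intro i j hi hj
    rw [hhole]
    simp only
    rw [hj]
    exact adv_ne hdvd (harith i hi).1 (harith i hi).2
  have hexec : IsExec k σ C := by
    refine ⟨by rw [hCdef]; simp, fun i => ⟨?_, ?_, ?_⟩⟩
    · -- σ i ∈ C (i+1)
      by_cases h1 : i + 1 ≤ k
      · rw [hCdef]
        simp only [if_pos h1, List.mem_toFinset, List.mem_map]
        exact ⟨i, List.mem_range.mpr (Nat.lt_succ_self i), rfl⟩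
      · rw [hCdef]
        simp only [if_neg h1]
        refine Finset.mem_erase.mpr ⟨?_, hmem i⟩
        exact hhole_ne i (i+1) (by omega) (by rw [Nat.add_sub_cancel])
    · -- subset
      by_cases h1 : i + 1 ≤ k
      · intro x hx
        rw [hCdef] at hx
        simp only [if_pos h1, List.mem_toFinset, List.mem_map] at hx
        obtain ⟨u, hu, hux⟩ := hx
        rw [List.mem_range] at hu
        rcases Nat.lt_or_ge u i with h | h
        · refine Finset.mem_insert_of_mem ?_
          rw [hCdef]
          simp only [if_pos (by omega : i ≤ k), List.mem_toFinset, List.mem_map]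
          exact ⟨u, List.mem_range.mpr h, hux⟩
        · have : u = i := by omega
          subst this
          exact Finset.mem_insert.mpr (Or.inl hux.symm)
      · by_cases h2 : i ≤ k
        · -- i = k
          have hik : i = k := by omega
          intro x hx
          rw [hCdef] at hx
          simp only [if_neg h1] at hx
          have hxall : x ∈ allP := Finset.mem_of_mem_erase hx
          rw [hallP] at hxall
          simp only [List.mem_toFinset, List.mem_map] at hxall
          obtain ⟨u, hu, hux⟩ := hxall
          rw [List.mem_range] at hu
          rcases Nat.lt_or_ge u k with h | h
          · refine Finset.mem_insert_of_mem ?_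
            rw [hCdef]
            simp only [if_pos h2, List.mem_toFinset, List.mem_map]
            exact ⟨u, List.mem_range.mpr (by omega), hux⟩
          · have : u = i := by omega
            subst this
            exact Finset.mem_insert.mpr (Or.inl hux.symm)
        · -- i > k
          have hik : k < i := by omega
          by_cases h3 : k ∣ i
          · have hhi : hole i = σ i := by
              rw [hhole]
              simp only
              congr 1
              have h5 := hq_dvd i (by omega) h3
              have h6 : (i/k)*k = i := Nat.div_mul_cancel h3
              have h7 : ((i-1)/k + 1)*k = (i-1)/k*k + k := by ring
              have h8 : ((i-1)/k + 1)*k = (i/k)*k := by rw [h5]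
              omega
            intro x hx
            rw [hCdef] at hx ⊢
            simp only [if_neg h1] at hx
            simp only [if_neg h2]
            rw [hhi]
            rw [Finset.insert_erase (hmem i)]
            exact Finset.mem_of_mem_erase hx
          · have hholes : hole (i+1) = hole i := by
              rw [hhole]
              simp only
              congr 2
              rw [Nat.add_sub_cancel]
              exact (hq_ndvd i (by omega) h3).symm ▸ rfl
            intro x hx
            rw [hCdef] at hx ⊢
            simp only [if_neg h1] at hx
            simp only [if_neg h2]
            rw [hholes] at hx
            exact Finset.mem_insert_of_mem hx
    · -- card
      by_cases h1 : i + 1 ≤ k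
      · rw [hCdef]
        simp only [if_pos h1]
        calc ((List.range (i+1)).map σ).toFinset.card
            ≤ ((List.range (i+1)).map σ).length := List.toFinset_card_le _
          _ = i + 1 := by rw [List.length_map, List.length_range]
          _ ≤ k := h1
      · rw [hCdef]
        simp only [if_neg h1]
        rw [Finset.card_erase_of_mem (hmem _)]
        have : allP.card ≤ k + 1 := by
          calc allP.card ≤ ((List.range (k+1)).map σ).length := List.toFinset_card_le _
            _ = k + 1 := by rw [List.length_map, List.length_range]
        omega
  have hhits : ∀ i, k < i → ¬ k ∣ i → σ i ∈ C i := by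
    intro i hi hnd
    rw [hCdef]
    simp only [if_neg (by omega : ¬ i ≤ k)]
    exact Finset.mem_erase.mpr ⟨hhole_ne i i (by omega) (hq_ndvd i (by omega) hnd), hmem i⟩
  refine le_trans (OPT_le hexec m) ?_
  unfold missCount
  have hsub : (Finset.range m).filter (fun i => σ i ∉ C i) ⊆
      ((Finset.range m).filter (fun i => i ≤ k)) ∪ ((Finset.range m).filter (fun i => k ∣ i)) := by
    intro x hx
    rw [Finset.mem_filter] at hx
    rcases le_or_gt x k with h | h
    · exact Finset.mem_union_left _ (Finset.mem_filter.mpr ⟨hx.1, h⟩)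
    · refine Finset.mem_union_right _ (Finset.mem_filter.mpr ⟨hx.1, ?_⟩)
      by_contra hc
      exact hx.2 (hhits x h hc)
  have h1 : ((Finset.range m).filter (fun i => i ≤ k)).card ≤ k + 1 := by
    calc ((Finset.range m).filter (fun i => i ≤ k)).card
        ≤ (Finset.range (k+1)).card := by
          apply Finset.card_le_card
          intro x hx
          rw [Finset.mem_filter] at hx
          exact Finset.mem_range.mpr (by omega)
      _ = k + 1 := Finset.card_range _
  have h2 : ((Finset.range m).filter (fun i => k ∣ i)).card ≤ m / k + 1 := by
    calc ((Finset.range m).filter (fun i => k ∣ i)).card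
        ≤ (Finset.range (m/k + 1)).card := by
          apply Finset.card_le_card_of_injOn (fun i => i / k)
          · intro a ha
            rw [Finset.mem_coe, Finset.mem_filter, Finset.mem_range] at ha
            rw [Finset.mem_coe, Finset.mem_range]
            show a / k < m / k + 1
            have := Nat.div_le_div_right (c := k) (le_of_lt ha.1)
            omega
          · intro a ha b hb hab
            simp only [Finset.coe_filter, Set.mem_setOf_eq] at ha hb
            have ha2 : a / k * k = a := Nat.div_mul_cancel ha.2
            have hb2 : b / k * k = b := Nat.div_mul_cancel hb.2
            have hab2 : a / k = b / k := hab
            rw [← ha2, ← hb2, hab2]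
      _ = m / k + 1 := Finset.card_range _
  calc ((Finset.range m).filter (fun i => σ i ∉ C i)).card
      ≤ (((Finset.range m).filter (fun i => i ≤ k)) ∪ ((Finset.range m).filter (fun i => k ∣ i))).card :=
        Finset.card_le_card hsub
    _ ≤ _ + _ := Finset.card_union_le _ _
    _ ≤ m / k + (k + 2) := by omega

/-- For any `ℓ ≥ 1` and cache size `k ≥ 1` such that `ℓ`
divides `k + 1` (and with enough pages, `n * ℓ ≥ k + 1`), the competitive
ratio of LRU for the `ℓ`-layered paging problem equals exactly `k`: LRU is
`k`-competitive, and whenever LRU is `r`-competitive with additive constant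
`c`, necessarily `r ≥ k`. -/
theorem lru_competitive_ratio_eq
    {n ℓ k : ℕ} (hℓ : 1 ≤ ℓ) (hk : 1 ≤ k) (hdvd : ℓ ∣ k + 1)
    (hpages : k + 1 ≤ n * ℓ) :
    (∃ c : ℝ, ∀ σ : ℕ → ℕ × ℕ, IsLayered n ℓ σ → ∀ m : ℕ,
        (lruCost k σ m : ℝ) ≤ (k : ℝ) * (OPT k σ m : ℝ) + c) ∧
      ∀ r c : ℝ, (∀ σ : ℕ → ℕ × ℕ, IsLayered n ℓ σ → ∀ m : ℕ,
          (lruCost k σ m : ℝ) ≤ r * (OPT k σ m : ℝ) + c) →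
        (k : ℝ) ≤ r := by
  constructor
  · refine ⟨(k : ℝ), fun σ _ m => ?_⟩
    have := lru_upper hk σ m
    exact_mod_cast this
  · intro r c h
    have hlay : IsLayered n ℓ (advSeq ℓ k) := by
      intro i
      refine ⟨rfl, ?_⟩
      show (i % (k+1)) / ℓ < n
      rw [Nat.div_lt_iff_lt_mul (by omega : 0 < ℓ)]
      have := Nat.mod_lt i (show 0 < k + 1 by omega)
      omega
    have hmain : ∀ m : ℕ, (m : ℝ) ≤ r * (OPT k (advSeq ℓ k) m : ℝ) + c := by
      intro m
      have := h (advSeq ℓ k) hlay m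
      rwa [adv_lruCost hdvd hk m] at this
    by_contra hcon
    push_neg at hcon
    rcases le_or_gt 0 r with hr0 | hr0
    · obtain ⟨m, hm⟩ := exists_nat_gt (((k:ℝ) * (r * ((k:ℝ)+2) + c)) / ((k:ℝ) - r))
      have hkr : (0:ℝ) < (k:ℝ) - r := by linarith
      rw [div_lt_iff₀ hkr] at hm
      have A := hmain m
      have hoptn := adv_OPT_le hdvd hk m
      set q : ℝ := ((m / k : ℕ) : ℝ) with hq
      have B : ((OPT k (advSeq ℓ k) m : ℕ) : ℝ) ≤ q + ((k:ℝ) + 2) := by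
        rw [hq]
        exact_mod_cast hoptn
      have Cq : (k:ℝ) * q ≤ (m : ℝ) := by
        rw [hq]
        have := Nat.div_mul_le_self m k
        have h2 : k * (m / k) ≤ m := by rw [Nat.mul_comm]; exact this
        exact_mod_cast h2
      have B' : r * ((OPT k (advSeq ℓ k) m : ℕ) : ℝ) ≤ r * (q + ((k:ℝ) + 2)) :=
        mul_le_mul_of_nonneg_left B hr0
      have hexp : r * (q + ((k:ℝ) + 2)) = r * q + r * ((k:ℝ) + 2) := by ring
      have A' : (m : ℝ) ≤ r * q + r * ((k:ℝ) + 2) + c := by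
        rw [← hexp] at *
        linarith
      have hkpos : (0:ℝ) < (k : ℝ) := by exact_mod_cast hk
      have A'' : (k:ℝ) * (m:ℝ) ≤ (k:ℝ) * (r * q) + (k:ℝ) * (r * ((k:ℝ)+2) + c) := by
        nlinarith
      have hrq : (k:ℝ) * (r * q) = r * ((k:ℝ) * q) := by ring
      have hrm : r * ((k:ℝ) * q) ≤ r * (m:ℝ) := mul_le_mul_of_nonneg_left Cq hr0
      have e1 : (m:ℝ) * ((k:ℝ) - r) = (k:ℝ) * m - r * m := by ring
      linarith
    · obtain ⟨m, hm⟩ := exists_nat_gt c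
      have A := hmain m
      have hopt0 : (0:ℝ) ≤ ((OPT k (advSeq ℓ k) m : ℕ) : ℝ) := by positivity
      have : r * ((OPT k (advSeq ℓ k) m : ℕ) : ℝ) ≤ 0 :=
        mul_nonpos_of_nonpos_of_nonneg (le_of_lt hr0) hopt0
      linarith
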